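/- arXiv:1604.08947 — 2 statements merged into one kernel-verified Lean document; each statement's English description precedes it below -/
import Mathlib

section
/- Let (x_n)_{n∈ℕ} be a sequence in ℝ^d and (T_k)_{k∈ℕ} a strictly increasing sequence of natural numbers with T₀ = 0; set L_k = T_{k+1} − T_k, λ̃_k(x) = x_{T_k}, and let the k-th excursion be the sequence Ẽ^{(k)}(x)_m = x_{T_k + m} − x_{T_k} for 0 ≤ m ≤ L_k. Then for every n ∈ ℕ and all 1 ≤ i,j ≤ d, the discrete signed area decomposes along excursions as A^{ij}_{T_n}(x) = Σ_{p=0}^{n−1} A^{ij}_{L_p}(Ẽ^{(p)}(x)) + A^{ij}_n(λ̃(x)). -/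
/-- The discrete signed area of a sequence `x : ℕ → ℝ^d`:
`A^{ij}_n(x) = Σ_{1≤k<l≤n} ((Δx^{(i)})_k (Δx^{(j)})_l − (Δx^{(j)})_k (Δx^{(i)})_l)`. -/
def discreteArea {d : ℕ} (x : ℕ → Fin d → ℝ) (i j : Fin d) (n : ℕ) : ℝ :=
  ∑ k ∈ Finset.Icc 1 n, ∑ l ∈ Finset.Icc (k + 1) n,
    ((x k i - x (k - 1) i) * (x l j - x (l - 1) j) -
      (x k j - x (k - 1) j) * (x l i - x (l - 1) i))

private lemma tele_aux (f : ℕ → ℝ) (m : ℕ) :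
    ∑ k ∈ Finset.Ioc 0 m, (f k - f (k - 1)) = f m - f 0 := by
  induction m with
  | zero => simp
  | succ m ih =>
      rw [Finset.sum_Ioc_succ_top (Nat.zero_le m), ih]
      simp

private lemma area_Ioc {d : ℕ} (x : ℕ → Fin d → ℝ) (i j : Fin d) (N : ℕ) :
    discreteArea x i j N = ∑ k ∈ Finset.Ioc 0 N, ∑ l ∈ Finset.Ioc k N,
      ((x k i - x (k - 1) i) * (x l j - x (l - 1) j) -
        (x k j - x (k - 1) j) * (x l i - x (l - 1) i)) := by
  unfold discreteArea
  rw [show Finset.Icc 1 N = Finset.Ioc 0 N by rw [← Finset.Icc_add_one_left_eq_Ioc]; rfl]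
  exact Finset.sum_congr rfl fun k _ => by rw [Finset.Icc_add_one_left_eq_Ioc]

private lemma area_split {d : ℕ} (x : ℕ → Fin d → ℝ) (i j : Fin d) {m n : ℕ} (h : m ≤ n) :
    discreteArea x i j n = discreteArea x i j m
      + discreteArea (fun t => x (m + t) - x m) i j (n - m)
      + ((x m i - x 0 i) * (x n j - x m j) - (x m j - x 0 j) * (x n i - x m i)) := by
  classical
  set g : ℕ → ℕ → ℝ := fun k l =>
    (x k i - x (k - 1) i) * (x l j - x (l - 1) j) -
      (x k j - x (k - 1) j) * (x l i - x (l - 1) i) with hg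
  -- split the outer sum
  have hsplit1 :
      ∑ k ∈ Finset.Ioc 0 n, ∑ l ∈ Finset.Ioc k n, g k l =
        (∑ k ∈ Finset.Ioc 0 m, ∑ l ∈ Finset.Ioc k m, g k l)
          + (∑ k ∈ Finset.Ioc 0 m, ∑ l ∈ Finset.Ioc m n, g k l)
          + ∑ k ∈ Finset.Ioc m n, ∑ l ∈ Finset.Ioc k n, g k l := by
    rw [← Finset.sum_Ioc_consecutive (fun k => ∑ l ∈ Finset.Ioc k n, g k l) (Nat.zero_le m) h]
    have : ∀ k ∈ Finset.Ioc 0 m,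
        (∑ l ∈ Finset.Ioc k n, g k l) =
          (∑ l ∈ Finset.Ioc k m, g k l) + ∑ l ∈ Finset.Ioc m n, g k l := by
      intro k hk
      rw [Finset.sum_Ioc_consecutive _ (Finset.mem_Ioc.1 hk).2 h]
    rw [Finset.sum_congr rfl this, Finset.sum_add_distrib]
  -- middle (cross) term
  have hcross :
      (∑ k ∈ Finset.Ioc 0 m, ∑ l ∈ Finset.Ioc m n, g k l) =
        ((x m i - x 0 i) * (x n j - x m j) - (x m j - x 0 j) * (x n i - x m i)) := by
    have e1 : ∑ k ∈ Finset.Ioc 0 m, (x k i - x (k - 1) i) = x m i - x 0 i := tele_aux _ m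
    have e2 : ∑ k ∈ Finset.Ioc 0 m, (x k j - x (k - 1) j) = x m j - x 0 j := tele_aux _ m
    have e3 : ∑ l ∈ Finset.Ioc m n, (x l j - x (l - 1) j) = x n j - x m j := by
      have h0 := tele_aux (fun k => x k j) m
      have hc := Finset.sum_Ioc_consecutive (fun k => x k j - x (k - 1) j) (Nat.zero_le m) h
      rw [h0, tele_aux (fun k => x k j) n] at hc
      linarith
    have e4 : ∑ l ∈ Finset.Ioc m n, (x l i - x (l - 1) i) = x n i - x m i := by
      have h0 := tele_aux (fun k => x k i) m
      have hc := Finset.sum_Ioc_consecutive (fun k => x k i - x (k - 1) i) (Nat.zero_le m) h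
      rw [h0, tele_aux (fun k => x k i) n] at hc
      linarith
    calc (∑ k ∈ Finset.Ioc 0 m, ∑ l ∈ Finset.Ioc m n, g k l)
        = (∑ k ∈ Finset.Ioc 0 m, ∑ l ∈ Finset.Ioc m n,
            (x k i - x (k - 1) i) * (x l j - x (l - 1) j))
          - ∑ k ∈ Finset.Ioc 0 m, ∑ l ∈ Finset.Ioc m n,
            (x k j - x (k - 1) j) * (x l i - x (l - 1) i) := by
          simp only [hg, Finset.sum_sub_distrib]
      _ = (x m i - x 0 i) * (x n j - x m j) - (x m j - x 0 j) * (x n i - x m i) := by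
          rw [← Finset.sum_mul_sum, ← Finset.sum_mul_sum, e1, e2, e3, e4]
  -- last term: reindex to the excursion
  have hlast :
      (∑ k ∈ Finset.Ioc m n, ∑ l ∈ Finset.Ioc k n, g k l) =
        discreteArea (fun t => x (m + t) - x m) i j (n - m) := by
    rw [area_Ioc]
    have hIoc : ∀ a b : ℕ, Finset.Ioc (m + a) (m + b) =
        Finset.map (addLeftEmbedding m) (Finset.Ioc a b) := fun a b =>
      (Finset.map_add_left_Ioc a b m).symm
    have h1 : Finset.Ioc m n = Finset.map (addLeftEmbedding m) (Finset.Ioc 0 (n - m)) := by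
      have := hIoc 0 (n - m)
      rwa [Nat.add_zero, Nat.add_sub_cancel' h] at this
    rw [h1, Finset.sum_map]
    refine Finset.sum_congr rfl fun t ht => ?_
    have ht1 : 1 ≤ t := (Finset.mem_Ioc.1 ht).1
    have h2 : Finset.Ioc ((addLeftEmbedding m) t) n =
        Finset.map (addLeftEmbedding m) (Finset.Ioc t (n - m)) := by
      have := hIoc t (n - m)
      rw [Nat.add_sub_cancel' h] at this
      simpa [addLeftEmbedding] using this
    rw [h2, Finset.sum_map]
    refine Finset.sum_congr rfl fun s hs => ?_
    have hs1 : 1 ≤ s := le_trans ht1 (Nat.le_of_lt (Finset.mem_Ioc.1 hs).1)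
    have em : ∀ u : ℕ, 1 ≤ u → m + u - 1 = m + (u - 1) := fun u hu => by omega
    simp only [hg, addLeftEmbedding, Function.Embedding.coeFn_mk, Pi.sub_apply]
    rw [em t ht1, em s hs1]
    ring
  have h0 : discreteArea x i j n = ∑ k ∈ Finset.Ioc 0 n, ∑ l ∈ Finset.Ioc k n, g k l :=
    area_Ioc x i j n
  have h0m : discreteArea x i j m = ∑ k ∈ Finset.Ioc 0 m, ∑ l ∈ Finset.Ioc k m, g k l :=
    area_Ioc x i j m
  rw [h0, hsplit1, hcross, hlast, ← h0m]
  ring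

private lemma area_one {d : ℕ} (y : ℕ → Fin d → ℝ) (i j : Fin d) :
    discreteArea y i j 1 = 0 := by
  unfold discreteArea
  rw [Finset.Icc_self, Finset.sum_singleton]
  rw [show Finset.Icc (1 + 1) 1 = ∅ from Finset.Icc_eq_empty (by omega)]
  simp

/-- Decomposition of the discrete signed area along excursions: if
`(T_k)` is strictly increasing with `T₀ = 0`, `L_k = T_{k+1} − T_k`, `λ̃_k(x) = x_{T_k}`
and `Ẽ^{(k)}(x)_m = x_{T_k+m} − x_{T_k}`, then
`A^{ij}_{T_n}(x) = Σ_{p<n} A^{ij}_{L_p}(Ẽ^{(p)}(x)) + A^{ij}_n(λ̃(x))`. -/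
theorem discreteArea_decomposition_along_excursions
    {d : ℕ} (x : ℕ → Fin d → ℝ) (T : ℕ → ℕ)
    (hT0 : T 0 = 0) (hTmono : StrictMono T) :
    ∀ (n : ℕ) (i j : Fin d),
      discreteArea x i j (T n) =
        (∑ p ∈ Finset.range n,
            discreteArea (fun m => x (T p + m) - x (T p)) i j (T (p + 1) - T p)) +
          discreteArea (fun k => x (T k)) i j n := by
  intro n
  induction n with
  | zero =>
      intro i j
      simp [discreteArea, hT0]
  | succ n ih =>
      intro i j
      have hmn : T n ≤ T (n + 1) := (hTmono (Nat.lt_succ_self n)).le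
      rw [area_split x i j hmn, ih i j]
      rw [Finset.sum_range_succ]
      have hlam := area_split (fun k => x (T k)) i j (Nat.le_succ n)
      rw [show n + 1 - n = 1 by omega, area_one] at hlam
      simp only [Nat.succ_eq_add_one] at hlam ⊢
      rw [hlam, hT0]
      ring
end

section
/- Let p ∈ (0,1) and let (U_k)_{k≥1} be i.i.d. random variables with P(U_k = 1) = p and P(U_k = −1) = 1 − p. Define X'_n = Σ_{k=1}^n Re(i^{k−1}) U_k and Y'_n = Σ_{k=1}^n Im(i^{k−1}) U_k (where i is the imaginary unit), and let A_n(X',Y') = (1/2) Σ_{1≤k<l≤n} ((X'_k − X'_{k−1})(Y'_l − Y'_{l−1}) − (Y'_k − Y'_{k−1})(X'_l − X'_{l−1})) be the discrete stochastic area. Then the rescaled expected area converges to the area anomaly: lim_{n→∞} E[A_n(X',Y')]/(2 n p (1−p)) = (2p−1)²/(8 p (1−p)). -/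
open MeasureTheory ProbabilityTheory Filter
open scoped ENNReal

noncomputable def RBW.sfun (k : ℕ) : ℝ := (Complex.I ^ k).im

noncomputable def RBW.cfun (a b : ℕ) : ℝ :=
  (Complex.I ^ a).re * (Complex.I ^ b).im - (Complex.I ^ a).im * (Complex.I ^ b).re

noncomputable def RBW.Gfun (m : ℕ) : ℝ := ∑ j ∈ Finset.range m, RBW.sfun (j + 1)

noncomputable def RBW.Tfun (n : ℕ) : ℝ := ∑ i ∈ Finset.range n, RBW.Gfun i

namespace RBW

lemma sfun_add_two (k : ℕ) : sfun (k + 2) = - sfun k := by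
  simp [sfun, pow_add, Complex.I_sq]

lemma cfun_eq (a d : ℕ) : cfun a (a + d) = sfun d := by
  have h0 : Complex.normSq (Complex.I ^ a) = 1 := by
    rw [map_pow, Complex.normSq_I, one_pow]
  rw [Complex.normSq_apply] at h0
  simp only [cfun, sfun, pow_add, Complex.mul_re, Complex.mul_im]
  linear_combination (Complex.I ^ d).im * h0

lemma Gfun_succ (m : ℕ) : Gfun (m + 1) = Gfun m + sfun (m + 1) :=
  Finset.sum_range_succ _ _

lemma Gfun_add_four (m : ℕ) : Gfun (m + 4) = Gfun m := by
  rw [show m + 4 = m + 3 + 1 from rfl, Gfun_succ, show m + 3 = m + 2 + 1 from rfl, Gfun_succ,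
    show m + 2 = m + 1 + 1 from rfl, Gfun_succ]
  have h1 : sfun (m + 1 + 1 + 1) = - sfun (m + 1) := by
    rw [show m + 1 + 1 + 1 = (m + 1) + 2 from rfl, sfun_add_two]
  have h2 : sfun (m + 1 + 1 + 1 + 1) = - sfun (m + 1 + 1) := by
    rw [show m + 1 + 1 + 1 + 1 = (m + 1 + 1) + 2 from rfl, sfun_add_two]
  linarith [h1, h2, Gfun_succ m]

lemma window (n : ℕ) : Gfun n + Gfun (n + 1) + Gfun (n + 2) + Gfun (n + 3) = 2 := by
  induction n with
  | zero =>
    norm_num [Gfun, sfun, Finset.sum_range_succ, pow_succ, Complex.I_sq]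
  | succ n ih =>
    have h4 : Gfun (n + 1 + 3) = Gfun n := by
      rw [show n + 1 + 3 = n + 4 from rfl, Gfun_add_four]
    rw [show n + 1 + 1 = n + 2 from rfl, show n + 1 + 2 = n + 3 from rfl, h4]
    linarith

lemma Tfun_succ (n : ℕ) : Tfun (n + 1) = Tfun n + Gfun n := Finset.sum_range_succ _ _

lemma Tfun_add_four (n : ℕ) : Tfun (n + 4) = Tfun n + 2 := by
  rw [show n + 4 = n + 3 + 1 from rfl, Tfun_succ, show n + 3 = n + 2 + 1 from rfl, Tfun_succ,
    show n + 2 = n + 1 + 1 from rfl, Tfun_succ, Tfun_succ]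
  have := window n
  linarith

lemma Tfun_bound (n : ℕ) : |2 * Tfun n - n| ≤ 1 := by
  induction n using Nat.strong_induction_on with
  | _ n ih =>
    match n, ih with
    | 0, _ => norm_num [Tfun]
    | 1, _ => norm_num [Tfun, Gfun, Finset.sum_range_succ]
    | 2, _ => norm_num [Tfun, Gfun, sfun, Finset.sum_range_succ, pow_succ, Complex.I_sq]
    | 3, _ => norm_num [Tfun, Gfun, sfun, Finset.sum_range_succ, pow_succ, Complex.I_sq]
    | (m + 4), ih =>
      have h := ih m (by omega)
      rw [Tfun_add_four]
      push_cast
      have : 2 * (Tfun m + 2) - ((m : ℝ) + 4) = 2 * Tfun m - m := by ring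
      rw [this]; exact h

lemma Tfun_tendsto : Tendsto (fun n : ℕ => Tfun n / n) atTop (nhds (1 / 2)) := by
  have h0 : Tendsto (fun n : ℕ => Tfun n / n - 1 / 2) atTop (nhds 0) := by
    refine squeeze_zero_norm' (a := fun n : ℕ => 1 / (n : ℝ)) ?_ tendsto_one_div_atTop_nhds_zero_nat
    filter_upwards [eventually_ge_atTop 1] with n hn
    have hn' : (0 : ℝ) < n := by exact_mod_cast hn
    have heq : Tfun n / n - 1 / 2 = (2 * Tfun n - n) / (2 * n) := by
      field_simp
    rw [Real.norm_eq_abs, heq, abs_div, abs_of_pos (show (0:ℝ) < 2 * (n:ℝ) by linarith)]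
    calc |2 * Tfun n - (n : ℝ)| / (2 * n) ≤ 1 / (2 * n) := by
          gcongr; exact Tfun_bound n
      _ ≤ 1 / n := one_div_le_one_div_of_le hn' (by linarith)
  have := h0.add (tendsto_const_nhds (x := (1 / 2 : ℝ)))
  simpa using this

end RBW

/-- For the rotating Bernoulli walk `Z'_n = Σ_{k=1}^n i^{k−1} U_k`
(here the variable `U k` stands for `U_{k+1}`, so `X'_n = Σ_{k<n} Re(i^k) U_k` and
`Y'_n = Σ_{k<n} Im(i^k) U_k`), the rescaled expected discrete stochastic area converges
to the area anomaly: `E[A_n(X',Y')]/(2np(1−p)) → (2p−1)²/(8p(1−p))`. -/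
theorem rotating_bernoulli_walk_area_anomaly
    {Ω : Type*} {mΩ : MeasurableSpace Ω} (P : Measure Ω) [IsProbabilityMeasure P]
    (p : ℝ) (hp : p ∈ Set.Ioo (0 : ℝ) 1)
    (U : ℕ → Ω → ℝ)
    (hmeas : ∀ k, Measurable (U k))
    (hindep : iIndepFun U P)
    (hdist1 : ∀ k, P {ω | U k ω = 1} = ENNReal.ofReal p)
    (hdist2 : ∀ k, P {ω | U k ω = -1} = ENNReal.ofReal (1 - p))
    (X' Y' : ℕ → Ω → ℝ)
    (hX' : ∀ n ω, X' n ω = ∑ k ∈ Finset.range n, (Complex.I ^ k).re * U k ω)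
    (hY' : ∀ n ω, Y' n ω = ∑ k ∈ Finset.range n, (Complex.I ^ k).im * U k ω)
    (A : ℕ → Ω → ℝ)
    (hA : ∀ n ω, A n ω = (1 / 2) *
      ∑ k ∈ Finset.Icc 1 n, ∑ l ∈ Finset.Icc (k + 1) n,
        ((X' k ω - X' (k - 1) ω) * (Y' l ω - Y' (l - 1) ω) -
          (Y' k ω - Y' (k - 1) ω) * (X' l ω - X' (l - 1) ω))) :
    Tendsto (fun n : ℕ => (∫ ω, A n ω ∂P) / (2 * n * p * (1 - p))) atTop
      (nhds ((2 * p - 1) ^ 2 / (8 * p * (1 - p)))) := by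
  obtain ⟨hp0, hp1⟩ := hp
  -- a.e. values of U
  have hae : ∀ k, ∀ᵐ ω ∂P, U k ω = 1 ∨ U k ω = -1 := by
    intro k
    have hAm : MeasurableSet {ω | U k ω = 1} := hmeas k (measurableSet_singleton 1)
    have hBm : MeasurableSet {ω | U k ω = -1} := hmeas k (measurableSet_singleton (-1))
    have hd : Disjoint {ω | U k ω = 1} {ω | U k ω = -1} := by
      rw [Set.disjoint_left]
      intro ω h1 h2
      simp only [Set.mem_setOf_eq] at h1 h2
      rw [h1] at h2; norm_num at h2
    have hu : P ({ω | U k ω = 1} ∪ {ω | U k ω = -1}) = 1 := by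
      rw [measure_union hd hBm, hdist1, hdist2,
        ← ENNReal.ofReal_add (by linarith) (by linarith)]
      norm_num
    have hc : P ({ω | U k ω = 1} ∪ {ω | U k ω = -1})ᶜ = 0 := by
      rw [measure_compl (hAm.union hBm) (measure_ne_top _ _), hu, measure_univ]
      simp
    have hset : {ω | ¬(U k ω = 1 ∨ U k ω = -1)} = ({ω | U k ω = 1} ∪ {ω | U k ω = -1})ᶜ := by
      ext ω; simp [not_or]
    rw [ae_iff, hset]
    exact hc
  -- integrability
  have hUint : ∀ k, Integrable (U k) P := by
    intro k
    refine Integrable.mono' (integrable_const (1 : ℝ)) (hmeas k).aestronglyMeasurable ?_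
    filter_upwards [hae k] with ω h
    rcases h with h | h <;> rw [h] <;> norm_num
  have hUUint : ∀ a b, Integrable (fun ω => U a ω * U b ω) P := by
    intro a b
    refine Integrable.mono' (integrable_const (1 : ℝ))
      ((hmeas a).mul (hmeas b)).aestronglyMeasurable ?_
    filter_upwards [hae a, hae b] with ω h1 h2
    rcases h1 with h1 | h1 <;> rcases h2 with h2 | h2 <;> rw [h1, h2] <;> norm_num
  -- expectation of U
  have hEU : ∀ k, ∫ ω, U k ω ∂P = 2 * p - 1 := by
    intro k
    have hAm : MeasurableSet {ω | U k ω = 1} := hmeas k (measurableSet_singleton 1)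
    have heq : U k =ᵐ[P]
        fun ω => Set.indicator {ω | U k ω = 1} (fun _ => (2 : ℝ)) ω - 1 := by
      filter_upwards [hae k] with ω h
      rcases h with h | h
      · rw [Set.indicator_of_mem (by exact h)]
        rw [h]; norm_num
      · rw [Set.indicator_of_notMem (by rw [Set.mem_setOf_eq, h]; norm_num)]
        rw [h]; norm_num
    rw [integral_congr_ae heq]
    have hind : Integrable (fun ω => Set.indicator {ω | U k ω = 1} (fun _ => (2 : ℝ)) ω) P := by
      exact IntegrableOn.integrable_indicator
        (integrableOn_const (measure_ne_top _ _)) hAm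
    rw [integral_sub hind (integrable_const 1)]
    rw [integral_indicator_const _ hAm, measureReal_def, hdist1, integral_const]
    simp [ENNReal.toReal_ofReal hp0.le]
    ring
  -- expectation of products
  have hEUU : ∀ a b, a ≠ b → ∫ ω, U a ω * U b ω ∂P = (2 * p - 1) * (2 * p - 1) := by
    intro a b hab
    have h := IndepFun.integral_fun_mul_eq_mul_integral (hindep.indepFun hab)
      (hUint a).aestronglyMeasurable (hUint b).aestronglyMeasurable
    have h2 : ∫ ω, U a ω * U b ω ∂P = (∫ ω, U a ω ∂P) * ∫ ω, U b ω ∂P := h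
    rw [h2, hEU a, hEU b]
  -- increments
  have hXincr : ∀ (j : ℕ) (ω : Ω), X' (j + 1) ω - X' j ω = (Complex.I ^ j).re * U j ω := by
    intro j ω
    rw [hX', hX', Finset.sum_range_succ]
    ring
  have hYincr : ∀ (j : ℕ) (ω : Ω), Y' (j + 1) ω - Y' j ω = (Complex.I ^ j).im * U j ω := by
    intro j ω
    rw [hY', hY', Finset.sum_range_succ]
    ring
  -- rewrite A as a double range sum
  have hA' : ∀ n ω, A n ω = (1 / 2) *
      ∑ i ∈ Finset.range n, ∑ j ∈ Finset.range (n - (1 + i)),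
        RBW.cfun i (i + 1 + j) * (U i ω * U (i + 1 + j) ω) := by
    intro n ω
    rw [hA]
    congr 1
    rw [← Finset.Ico_add_one_right_eq_Icc, Finset.sum_Ico_eq_sum_range]
    rw [show n + 1 - 1 = n from rfl]
    refine Finset.sum_congr rfl fun i _ => ?_
    rw [← Finset.Ico_add_one_right_eq_Icc, Finset.sum_Ico_eq_sum_range]
    rw [show n + 1 - (1 + i + 1) = n - (1 + i) by omega]
    refine Finset.sum_congr rfl fun j _ => ?_
    have e1 : 1 + i = i + 1 := by omega
    have e2 : 1 + i - 1 = i := by omega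
    have e3 : 1 + i + 1 + j = (i + 1 + j) + 1 := by omega
    have e4 : 1 + i + 1 + j - 1 = i + 1 + j := by omega
    rw [e2, e4, e3, show (1 + i) = i + 1 from e1]
    rw [hXincr, hYincr, hXincr, hYincr, RBW.cfun]
    ring
  -- expectation of A
  have hIntA : ∀ n, ∫ ω, A n ω ∂P = (2 * p - 1) ^ 2 * RBW.Tfun n / 2 := by
    intro n
    simp only [hA']
    rw [integral_const_mul]
    rw [integral_finset_sum _ (fun i _ =>
      integrable_finset_sum _ (fun j _ => (hUUint i (i + 1 + j)).const_mul _))]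
    have hsum : ∀ i ∈ Finset.range n,
        (∫ ω, ∑ j ∈ Finset.range (n - (1 + i)),
          RBW.cfun i (i + 1 + j) * (U i ω * U (i + 1 + j) ω) ∂P)
        = RBW.Gfun (n - (1 + i)) * ((2 * p - 1) * (2 * p - 1)) := by
      intro i _
      rw [integral_finset_sum _ (fun j _ => (hUUint i (i + 1 + j)).const_mul _)]
      have hterm : ∀ j ∈ Finset.range (n - (1 + i)),
          (∫ ω, RBW.cfun i (i + 1 + j) * (U i ω * U (i + 1 + j) ω) ∂P)
          = RBW.sfun (j + 1) * ((2 * p - 1) * (2 * p - 1)) := by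
        intro j _
        rw [integral_const_mul, hEUU i (i + 1 + j) (by omega)]
        congr 1
        rw [show i + 1 + j = i + (j + 1) by omega, RBW.cfun_eq]
      rw [Finset.sum_congr rfl hterm, ← Finset.sum_mul, RBW.Gfun]
    rw [Finset.sum_congr rfl hsum, ← Finset.sum_mul]
    have hT : ∑ i ∈ Finset.range n, RBW.Gfun (n - (1 + i)) = RBW.Tfun n := by
      rw [show RBW.Tfun n = ∑ i ∈ Finset.range n, RBW.Gfun i from rfl,
        ← Finset.sum_range_reflect (fun i => RBW.Gfun i) n]
      refine Finset.sum_congr rfl fun i _ => ?_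
      congr 1
      omega
    rw [hT]
    ring
  -- final limit
  have hfinal : ∀ᶠ n : ℕ in atTop, ((2 * p - 1) ^ 2 / (4 * p * (1 - p))) * (RBW.Tfun n / n)
      = (∫ ω, A n ω ∂P) / (2 * n * p * (1 - p)) := by
    filter_upwards [eventually_ge_atTop 1] with n hn
    rw [hIntA]
    have hn' : (n : ℝ) ≠ 0 := by
      have : 0 < n := hn
      exact_mod_cast this.ne'
    rw [div_mul_div_comm, div_div]
    congr 1
    ring
  have hlim := RBW.Tfun_tendsto.const_mul ((2 * p - 1) ^ 2 / (4 * p * (1 - p)))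
  have h2 : ((2 * p - 1) ^ 2 / (4 * p * (1 - p))) * (1 / 2)
      = (2 * p - 1) ^ 2 / (8 * p * (1 - p)) := by
    rw [div_mul_div_comm]
    congr 1 <;> ring
  rw [← h2]
  exact hlim.congr' hfinal
end
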